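/- Let μ be a normal measure on a cardinal κ, h : κ → κ a block function with Kunen function Ξ, and let F₀, F₁ : T^h → κ be order-preserving (where T^h = {(α,β) : β < h(α)} with the lexicographic order). If for every β < ε^Ξ_h the slices satisfy F₀^(β) =_μ F₁^(β), then for μ-almost all α, F₀(α,β) = F₁(α,β) for all β < h(α). -/

import Mathlib

/-- `μ` is a normal measure on the cardinal `κ`: a `κ`-complete ultrafilter on
the subsets of (the ordinals below) `κ` such that every function regressive on
a set in `μ` is constant on a set in `μ`. -/
def IsNormalMeasure (κ : Cardinal) (μ : Set (Set Ordinal)) : Prop :=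
  (∀ S ∈ μ, S ⊆ Set.Iio κ.ord) ∧
  Set.Iio κ.ord ∈ μ ∧ (∅ : Set Ordinal) ∉ μ ∧
  (∀ S ∈ μ, ∀ T : Set Ordinal, S ⊆ T → T ⊆ Set.Iio κ.ord → T ∈ μ) ∧
  (∀ S ⊆ Set.Iio κ.ord, S ∈ μ ∨ (Set.Iio κ.ord \ S) ∈ μ) ∧
  (∀ ι < κ.ord, ∀ A : Ordinal → Set Ordinal, (∀ i < ι, A i ∈ μ) →
    (Set.Iio κ.ord ∩ ⋂ i ∈ Set.Iio ι, A i) ∈ μ) ∧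
  (∀ F : Ordinal → Ordinal, ∀ S ∈ μ, (∀ α ∈ S, F α < α) →
    ∃ ξ : Ordinal, {α ∈ S | F α = ξ} ∈ μ)

/-- `δ^Ξ_α = sup{Ξ(α,β) : β < α}`. -/
noncomputable def deltaXi (Ξ : Ordinal → Ordinal → Ordinal) (α : Ordinal) : Ordinal :=
  sSup ((fun β => Ξ α β) '' Set.Iio α)

/-- The column `Ξ^β : κ → κ`, with `Ξ^β(α) = Ξ(α,β)` for `α > β` and `0` otherwise. -/
noncomputable def XiCol (Ξ : Ordinal → Ordinal → Ordinal) (β : Ordinal) : Ordinal → Ordinal :=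
  fun α => if β < α then Ξ α β else 0

/-- `f` is a block function with respect to `μ`: `f(α) < |α|⁺` for `μ`-almost all `α`. -/
def IsBlockFun (κ : Cardinal) (μ : Set (Set Ordinal)) (f : Ordinal → Ordinal) : Prop :=
  {α | α < κ.ord ∧ f α < (Order.succ α.card).ord} ∈ μ

/-- `Ξ` is a Kunen function for `f` with respect to `μ`: for `μ`-almost all `α`,
`f(α) ≤ δ^Ξ_α` and `β ↦ Ξ(α,β)` maps `α` onto `δ^Ξ_α`. -/
def IsKunenFunctionFor (κ : Cardinal) (μ : Set (Set Ordinal))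
    (f : Ordinal → Ordinal) (Ξ : Ordinal → Ordinal → Ordinal) : Prop :=
  {α | α < κ.ord ∧ f α ≤ deltaXi Ξ α ∧ (∀ β < α, Ξ α β < deltaXi Ξ α) ∧
      ∀ γ < deltaXi Ξ α, ∃ β < α, Ξ α β = γ} ∈ μ

/-- `g <_μ h`: `g(α) < h(α)` for `μ`-almost all `α < κ`. -/
def LtMu (κ : Cardinal) (μ : Set (Set Ordinal)) (g h : Ordinal → Ordinal) : Prop :=
  {α | α < κ.ord ∧ g α < h α} ∈ μ

/-- `F : T^h → κ` is order preserving, where `T^h = {(α,β) : β < h α}` carries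
the lexicographic order. -/
def OrderPresOnT (κ : Cardinal) (h : Ordinal → Ordinal)
    (F : Ordinal → Ordinal → Ordinal) : Prop :=
  (∀ α < κ.ord, ∀ β < h α, F α β < κ.ord) ∧
  ∀ α α' β β' : Ordinal, α < κ.ord → α' < κ.ord → β < h α → β' < h α' →
    (α < α' ∨ (α = α' ∧ β < β')) → F α β < F α' β'

/-- if the corresponding slices of two order-preserving maps
`F₀, F₁ : T^h → κ` agree `μ`-a.e. (for every column `Ξ^β` representing a class
below `[h]_μ`, `F₀(·, Ξ^β(·)) =_μ F₁(·, Ξ^β(·))`), then for `μ`-almost all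
`α`, `F₀(α,β) = F₁(α,β)` for all `β < h(α)`. -/
theorem slices_agree_implies_agree (κ : Cardinal) (μ : Set (Set Ordinal))
    (hμ : IsNormalMeasure κ μ) (h : Ordinal → Ordinal)
    (hblock : IsBlockFun κ μ h) (Ξ : Ordinal → Ordinal → Ordinal)
    (hΞ : IsKunenFunctionFor κ μ h Ξ)
    (F₀ F₁ : Ordinal → Ordinal → Ordinal)
    (hF₀ : OrderPresOnT κ h F₀) (hF₁ : OrderPresOnT κ h F₁)
    (hslices : ∀ β < κ.ord, LtMu κ μ (XiCol Ξ β) h →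
      {α | α < κ.ord ∧ F₀ α (XiCol Ξ β α) = F₁ α (XiCol Ξ β α)} ∈ μ) :
    {α | α < κ.ord ∧ ∀ β < h α, F₀ α β = F₁ α β} ∈ μ := by

  obtain ⟨hsub, hIio, hempty, hup, hdec, hcomp, hnorm⟩ := hμ
  have hne : ∀ S ∈ μ, S.Nonempty := by
    intro S hS
    rw [Set.nonempty_iff_ne_empty]
    rintro rfl; exact hempty hS
  set concl := {α | α < κ.ord ∧ ∀ β < h α, F₀ α β = F₁ α β} with hconcl
  have hconclsub : concl ⊆ Set.Iio κ.ord := fun α hα => hα.1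
  by_cases hord : κ.ord ≤ 2
  · -- degenerate small case: the Kunen set is contained in the conclusion set
    refine hup _ hΞ concl ?_ hconclsub
    intro α hα
    obtain ⟨hακ, hhδ, hlt, hsurj⟩ := hα
    have hα2 : α < 2 := lt_of_lt_of_le hακ hord
    have : α = 0 ∨ α = 1 := by
      have h1 : α ≤ 1 := by
        have h2 : (2:Ordinal) = Order.succ 1 := by simp [one_add_one_eq_two]
        rw [h2, Order.lt_succ_iff] at hα2; exact hα2
      rcases lt_or_eq_of_le h1 with hh | hh
      · left; exact Ordinal.lt_one_iff_zero.mp hh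
      · right; exact hh
    rcases this with rfl | rfl
    · have hδ0 : deltaXi Ξ 0 = 0 := by
        unfold deltaXi
        have h0 : Set.Iio (0:Ordinal) = ∅ := by
          ext x; simp [not_lt_zero]
        rw [h0]; simp
      rw [hδ0] at hhδ
      have hh0 : h 0 = 0 := le_antisymm hhδ (zero_le (a := h 0))
      exact ⟨hακ, by rw [hh0]; intro β hβ; exact absurd hβ (not_lt_of_ge (zero_le (a := β)))⟩
    · exfalso
      have hδ1 : deltaXi Ξ 1 = Ξ 1 0 := by
        unfold deltaXi
        have : Set.Iio (1:Ordinal) = {0} := by ext x; simp [Ordinal.lt_one_iff_zero]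
        rw [this]; simp
      have := hlt 0 zero_lt_one
      rw [hδ1] at this
      exact lt_irrefl _ this
  · push_neg at hord
    -- binary intersection
    have hinter : ∀ S ∈ μ, ∀ T ∈ μ, S ∩ T ∈ μ := by
      intro S hS T hT
      have h2 := hcomp 2 hord (fun i => if i = 0 then S else T) ?_
      · refine hup _ h2 (S ∩ T) ?_ ?_
        · intro α hα
          obtain ⟨hα1, hα2⟩ := hα
          rw [Set.mem_iInter₂] at hα2
          have hS' := hα2 0 (by norm_num)
          have hT' := hα2 1 (by norm_num)
          simp only [if_pos rfl] at hS'
          simp only [one_ne_zero, if_false] at hT'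
          exact ⟨hS', hT'⟩
        · exact fun α hα => hsub S hS hα.1
      · intro i _
        by_cases hi : i = 0 <;> simp [hi, hS, hT]
    rcases hdec concl hconclsub with hc | hc
    · exact hc
    exfalso
    -- g α = least disagreement point
    set g : Ordinal → Ordinal :=
      fun α => sInf {β | β < h α ∧ F₀ α β ≠ F₁ α β} with hg
    set C := Set.Iio κ.ord \ concl with hC
    have hgC : ∀ α ∈ C, g α < h α ∧ F₀ α (g α) ≠ F₁ α (g α) := by
      intro α hα
      obtain ⟨hα1, hα2⟩ := hα
      have hnonempty : {β | β < h α ∧ F₀ α β ≠ F₁ α β}.Nonempty := by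
        by_contra hcon
        rw [Set.not_nonempty_iff_eq_empty] at hcon
        refine hα2 ⟨hα1, ?_⟩
        intro β hβ
        by_contra hne'
        have hmem : β ∈ {β | β < h α ∧ F₀ α β ≠ F₁ α β} := ⟨hβ, hne'⟩
        rw [hcon] at hmem
        exact hmem
      exact csInf_mem hnonempty
    -- intersect C with the Kunen set
    set W := {α | α < κ.ord ∧ h α ≤ deltaXi Ξ α ∧ (∀ β < α, Ξ α β < deltaXi Ξ α) ∧
      ∀ γ < deltaXi Ξ α, ∃ β < α, Ξ α β = γ} with hW
    have hS₁ : C ∩ W ∈ μ := hinter C hc W hΞ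
    set b : Ordinal → Ordinal :=
      fun α => sInf {β | β < α ∧ Ξ α β = g α} with hb
    have hbS₁ : ∀ α ∈ C ∩ W, b α < α ∧ Ξ α (b α) = g α := by
      rintro α ⟨hαC, hαW⟩
      obtain ⟨hκ', hhδ, hlt, hsurj⟩ := hαW
      have hg1 := (hgC α hαC).1
      obtain ⟨β, hβα, hβeq⟩ := hsurj (g α) (lt_of_lt_of_le hg1 hhδ)
      have hnonempty : {β | β < α ∧ Ξ α β = g α}.Nonempty := ⟨β, hβα, hβeq⟩
      exact csInf_mem hnonempty
    obtain ⟨β₀, hD⟩ := hnorm b (C ∩ W) hS₁ (fun α hα => (hbS₁ α hα).1)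
    set D := {α ∈ C ∩ W | b α = β₀} with hDdef
    obtain ⟨α₀, hα₀⟩ := hne D hD
    have hβ₀κ : β₀ < κ.ord :=
      lt_trans (hα₀.2 ▸ (hbS₁ α₀ hα₀.1).1) hα₀.1.1.1
    have hXiD : ∀ α ∈ D, XiCol Ξ β₀ α = g α ∧ XiCol Ξ β₀ α < h α := by
      rintro α ⟨hαCW, hbα⟩
      obtain ⟨hbα1, hbα2⟩ := hbS₁ α hαCW
      have hβ₀α : β₀ < α := hbα ▸ hbα1
      have heq : XiCol Ξ β₀ α = g α := by
        unfold XiCol; rw [if_pos hβ₀α, ← hbα, hbα2]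
      exact ⟨heq, heq ▸ (hgC α hαCW.1).1⟩
    have hLt : LtMu κ μ (XiCol Ξ β₀) h := by
      refine hup D hD _ ?_ (fun α hα => hα.1)
      intro α hα
      exact ⟨hα.1.1.1, (hXiD α hα).2⟩
    have hE := hslices β₀ hβ₀κ hLt
    obtain ⟨α, hαD, hαE⟩ := hne _ (hinter D hD _ hE)
    have h1 := (hXiD α hαD).1
    have h2 := (hgC α hαD.1.1).2
    have h3 := hαE.2
    rw [h1] at h3
    exact h2 h3
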